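/- Let b1, b2 be distinct positive integers. For T = b1 + b2 + ⌈(b1·b2)/|b1−b2|⌉ and all larger T, the inequality (T − max(b1,b2))·max(b1,b2) ≥ min(b1,b2)·(T − min(b1,b2) + max(b1,b2) − 1) holds; equivalently, ⌈(T − min(b1,b2))/max(b1,b2)⌉ ≤ (T − max(b1,b2))/min(b1,b2). -/
import Mathlib


/-- Quantitative version of Remark 1's sufficient condition: with
`B = max(b1,b2)`, `b = min(b1,b2)`, if `(T - b1 - b2)*(B - b) ≥ b*B`
then `B*(T - B) ≥ b*B*⌈(T-b)/B⌉`, i.e., `(T-B)/b ≥ ⌈(T-b)/B⌉`. -/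
theorem stmt15 (b1 b2 T : ℕ) (hb1 : 0 < b1) (hb2 : 0 < b2) (hne : b1 ≠ b2)
    (hT : b1 + b2 ≤ T)
    (h : (T - b1 - b2) * (max b1 b2 - min b1 b2) ≥ min b1 b2 * max b1 b2) :
    ((max b1 b2 : ℤ)) * (T - max b1 b2)
        ≥ (min b1 b2 : ℤ) * (max b1 b2) * ⌈((T : ℚ) - min b1 b2) / max b1 b2⌉ ∧
      ((T : ℚ) - max b1 b2) / min b1 b2 ≥ (⌈((T : ℚ) - min b1 b2) / max b1 b2⌉ : ℤ) := by
  set b := min b1 b2 with hbdef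
  set B := max b1 b2 with hBdef
  have hb : 0 < b := lt_min hb1 hb2
  have hbB : b ≤ B := min_le_max
  have hB : 0 < B := lt_of_lt_of_le hb hbB
  have hsum : b + B = b1 + b2 := min_add_max b1 b2
  have h1 : b1 ≤ T := le_trans (Nat.le_add_right _ _) hT
  have h2 : b2 ≤ T - b1 := by omega
  have hZ : ((T : ℤ) - b1 - b2) * ((B : ℤ) - b) ≥ (b : ℤ) * B := by
    zify [h1, h2, hbB] at h
    linarith [h]
  have hsZ : (b : ℤ) + B = (b1 : ℤ) + b2 := by exact_mod_cast hsum
  have hkey : (B : ℤ) * (T - B) ≥ (b : ℤ) * ((T : ℤ) - b + B) := by nlinarith [hZ, hsZ]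
  set c := ⌈((T : ℚ) - b) / B⌉ with hcdef
  have hBQ : (0 : ℚ) < B := by exact_mod_cast hB
  have hbQ : (0 : ℚ) < b := by exact_mod_cast hb
  have hcB : (c : ℤ) * B < (T : ℤ) - b + B := by
    have hlt : (c : ℚ) < ((T : ℚ) - b) / B + 1 := Int.ceil_lt_add_one _
    have hmul := mul_lt_mul_of_pos_right hlt hBQ
    have heq : (((T : ℚ) - b) / B + 1) * B = (T : ℚ) - b + B := by field_simp
    rw [heq] at hmul
    exact_mod_cast hmul
  have hbZ : (0 : ℤ) ≤ b := by positivity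
  have hstep : (c : ℤ) * B + 1 ≤ (T : ℤ) - b + B := by omega
  have g1 : ((B : ℤ)) * (T - B) ≥ (b : ℤ) * B * c := by
    nlinarith [mul_le_mul_of_nonneg_left hstep hbZ, hkey]
  refine ⟨by exact_mod_cast g1, ?_⟩
  have hcb : (c : ℤ) * b ≤ (T : ℤ) - B := by
    have hBZ : (0 : ℤ) < B := by exact_mod_cast hB
    have : (c : ℤ) * b * B ≤ ((T : ℤ) - B) * B := by nlinarith [g1]
    exact le_of_mul_le_mul_right this hBZ
  rw [ge_iff_le, le_div_iff₀ hbQ]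
  exact_mod_cast hcb
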